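/- Let S, T be self-adjoint closed range operators on a complex Hilbert space with ST = TS and ST of closed range. Then (ST)† = T† S†. -/

import Mathlib

open ContinuousLinearMap

/-- `Td` is the Moore–Penrose inverse of `T`. -/
def IsMoorePenroseInverse {H : Type*} [NormedAddCommGroup H] [InnerProductSpace ℂ H]
    [CompleteSpace H] (T Td : H →L[ℂ] H) : Prop :=
  T ∘L Td ∘L T = T ∧ Td ∘L T ∘L Td = Td ∧
    IsSelfAdjoint (T ∘L Td) ∧ IsSelfAdjoint (Td ∘L T)

section Aux

variable {H : Type*} [NormedAddCommGroup H] [InnerProductSpace ℂ H] [CompleteSpace H]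

/-- Uniqueness of the Moore–Penrose inverse (Penrose conditions, multiplicative form). -/
theorem mp_unique' {A C₁ C₂ : H →L[ℂ] H}
    (h1a : A * C₁ * A = A) (h1b : C₁ * A * C₁ = C₁)
    (h1c : IsSelfAdjoint (A * C₁)) (h1d : IsSelfAdjoint (C₁ * A))
    (h2a : A * C₂ * A = A) (h2b : C₂ * A * C₂ = C₂)
    (h2c : IsSelfAdjoint (A * C₂)) (h2d : IsSelfAdjoint (C₂ * A)) :
    C₁ = C₂ := by
  have e1 : A * C₁ = A * C₂ := by
    calc A * C₁ = star (A * C₁) := h1c.star_eq.symm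
    _ = star ((A * C₂) * (A * C₁)) := by rw [show (A*C₂)*(A*C₁) = A*C₁ by rw [← mul_assoc, h2a]]
    _ = star (A * C₁) * star (A * C₂) := star_mul _ _
    _ = (A * C₁) * (A * C₂) := by rw [h1c.star_eq, h2c.star_eq]
    _ = A * C₂ := by rw [← mul_assoc, h1a]
  have e2 : C₁ * A = C₂ * A := by
    calc C₁ * A = star (C₁ * A) := h1d.star_eq.symm
    _ = star ((C₁ * A) * (C₂ * A)) := by
        rw [show (C₁*A)*(C₂*A) = C₁*A by rw [mul_assoc, ← mul_assoc A C₂ A, h2a]]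
    _ = star (C₂ * A) * star (C₁ * A) := star_mul _ _
    _ = (C₂ * A) * (C₁ * A) := by rw [h1d.star_eq, h2d.star_eq]
    _ = C₂ * A := by rw [mul_assoc, ← mul_assoc A C₁ A, h1a]
  calc C₁ = C₁ * A * C₁ := h1b.symm
  _ = C₁ * (A * C₂) := by rw [mul_assoc, e1]
  _ = C₂ * A * C₂ := by rw [← mul_assoc, e2]
  _ = C₂ := h2b

/-- The MP inverse of a self-adjoint operator is self-adjoint. -/
theorem mp_star' {A C : H →L[ℂ] H} (hA : IsSelfAdjoint A)
    (h1 : A * C * A = A) (h2 : C * A * C = C)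
    (h3 : IsSelfAdjoint (A * C)) (h4 : IsSelfAdjoint (C * A)) :
    IsSelfAdjoint C := by
  have s1 : A * star C * A = A := by
    have := congrArg star h1
    rwa [star_mul, star_mul, hA.star_eq] at this
  have s2 : star C * A * star C = star C := by
    have := congrArg star h2
    rwa [star_mul, star_mul, hA.star_eq] at this
  have s3 : IsSelfAdjoint (A * star C) := by
    have : A * star C = C * A := by rw [← hA.star_eq, ← star_mul, h4.star_eq, hA.star_eq]
    rw [this]; exact h4
  have s4 : IsSelfAdjoint (star C * A) := by
    have : star C * A = A * C := by rw [← hA.star_eq, ← star_mul, h3.star_eq, hA.star_eq]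
    rw [this]; exact h3
  exact mp_unique' s1 s2 s3 s4 h1 h2 h3 h4

/-- A self-adjoint operator commutes with its MP inverse. -/
theorem mp_comm_self' {A C : H →L[ℂ] H} (hA : IsSelfAdjoint A)
    (h1 : A * C * A = A) (h2 : C * A * C = C)
    (h3 : IsSelfAdjoint (A * C)) (h4 : IsSelfAdjoint (C * A)) :
    C * A = A * C := by
  have hC := mp_star' hA h1 h2 h3 h4
  calc C * A = star (C * A) := h4.star_eq.symm
  _ = star A * star C := star_mul _ _
  _ = A * C := by rw [hA.star_eq, hC.star_eq]

/-- If self-adjoint `X` commutes with self-adjoint `A`, it commutes with the MP inverse of `A`. -/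
theorem mp_comm' {A C X : H →L[ℂ] H} (hA : IsSelfAdjoint A) (hX : IsSelfAdjoint X)
    (h1 : A * C * A = A) (h2 : C * A * C = C)
    (h3 : IsSelfAdjoint (A * C)) (h4 : IsSelfAdjoint (C * A))
    (hc : X * A = A * X) :
    X * C = C * X := by
  have hca : C * A = A * C := mp_comm_self' hA h1 h2 h3 h4
  have step1 : (A * C) * X * (A * C) = X * (A * C) := by
    calc (A * C) * X * (A * C) = A * (C * (X * A) * C) := by simp only [mul_assoc]
    _ = A * (C * (A * X) * C) := by rw [hc]
    _ = A * C * A * (X * C) := by simp only [mul_assoc]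
    _ = A * (X * C) := by rw [h1]
    _ = X * A * C := by rw [← mul_assoc, ← hc]
    _ = X * (A * C) := mul_assoc _ _ _
  have e1 : star ((A * C) * X * (A * C)) = (A * C) * X * (A * C) := by
    rw [star_mul (A * C * X) (A * C), star_mul (A * C) X, hX.star_eq, h3.star_eq, ← mul_assoc]
  have e2 : star ((A * C) * X * (A * C)) = (A * C) * X := by
    rw [step1, star_mul X (A * C), hX.star_eq, h3.star_eq]
  have step2 : (A * C) * X = X * (A * C) := (e1.symm.trans e2).symm.trans step1
  have hCP : C * (A * C) = C := by rw [← mul_assoc, h2]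
  have hPC : (A * C) * C = C := by rw [← hca, h2]
  symm
  calc C * X = C * (A * C) * X := by rw [hCP]
  _ = C * (X * (A * C)) := by rw [mul_assoc, step2]
  _ = C * (X * A) * C := by simp only [mul_assoc]
  _ = C * (A * X) * C := by rw [hc]
  _ = C * A * (X * C) := by simp only [mul_assoc]
  _ = (A * C) * (X * C) := by rw [hca]
  _ = X * ((A * C) * C) := by rw [← mul_assoc, step2, mul_assoc]
  _ = X * C := by rw [hPC]

end Aux

/-- For commuting self-adjoint closed range operators with `ST` of closed range,
`(ST)† = T† S†`. -/
theorem mp_inverse_of_commuting_selfAdjoint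
    {H : Type*} [NormedAddCommGroup H] [InnerProductSpace ℂ H] [CompleteSpace H]
    (S T Sd Td STd : H →L[ℂ] H)
    (hS : IsSelfAdjoint S) (hT : IsSelfAdjoint T)
    (hScr : IsClosed (LinearMap.range (S : H →ₗ[ℂ] H) : Set H))
    (hTcr : IsClosed (LinearMap.range (T : H →ₗ[ℂ] H) : Set H))
    (hcomm : S ∘L T = T ∘L S)
    (hSTcr : IsClosed (LinearMap.range ((S ∘L T : H →L[ℂ] H) : H →ₗ[ℂ] H) : Set H))
    (hSd : IsMoorePenroseInverse S Sd) (hTd : IsMoorePenroseInverse T Td)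
    (hSTd : IsMoorePenroseInverse (S ∘L T) STd) :
    STd = Td ∘L Sd := by
  -- translate all hypotheses to multiplicative (left-associated) form
  have hS1 : S * Sd * S = S := by rw [mul_assoc]; exact hSd.1
  have hS2 : Sd * S * Sd = Sd := by rw [mul_assoc]; exact hSd.2.1
  have hS3 : IsSelfAdjoint (S * Sd) := hSd.2.2.1
  have hS4 : IsSelfAdjoint (Sd * S) := hSd.2.2.2
  have hT1 : T * Td * T = T := by rw [mul_assoc]; exact hTd.1
  have hT2 : Td * T * Td = Td := by rw [mul_assoc]; exact hTd.2.1
  have hT3 : IsSelfAdjoint (T * Td) := hTd.2.2.1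
  have hT4 : IsSelfAdjoint (Td * T) := hTd.2.2.2
  have hA1 : (S * T) * STd * (S * T) = S * T := by rw [mul_assoc]; exact hSTd.1
  have hA2 : STd * (S * T) * STd = STd := by rw [mul_assoc]; exact hSTd.2.1
  have hA3 : IsSelfAdjoint ((S * T) * STd) := hSTd.2.2.1
  have hA4 : IsSelfAdjoint (STd * (S * T)) := hSTd.2.2.2
  have hC : T * S = S * T := hcomm.symm
  -- self-adjointness of the MP inverses
  have hSdsa : IsSelfAdjoint Sd := mp_star' hS hS1 hS2 hS3 hS4
  have hTdsa : IsSelfAdjoint Td := mp_star' hT hT1 hT2 hT3 hT4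
  -- pairwise commutation among S, Sd, T, Td  (oriented to the order S < Sd < T < Td)
  have cSdS : Sd * S = S * Sd := mp_comm_self' hS hS1 hS2 hS3 hS4
  have cTdT : Td * T = T * Td := mp_comm_self' hT hT1 hT2 hT3 hT4
  have cTSd : T * Sd = Sd * T := mp_comm' hS hT hS1 hS2 hS3 hS4 hC
  have cTdS : Td * S = S * Td := (mp_comm' hT hS hT1 hT2 hT3 hT4 hcomm).symm
  have cTdSd : Td * Sd = Sd * Td := mp_comm' hS hTdsa hS1 hS2 hS3 hS4 cTdS
  -- applied forms of the commutation rules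
  have ap : ∀ x y : H →L[ℂ] H, x * y = y * x → ∀ z, x * (y * z) = y * (x * z) :=
    fun x y h z => by rw [← mul_assoc, h, mul_assoc]
  have apTS := ap T S hC
  have apSdS := ap Sd S cSdS
  have apTdT := ap Td T cTdT
  have apTSd := ap T Sd cTSd
  have apTdS := ap Td S cTdS
  have apTdSd := ap Td Sd cTdSd
  -- contraction rules in sorted form
  have kS : S * (S * Sd) = S := by rw [← cSdS, ← mul_assoc]; exact hS1
  have kS2 : S * (Sd * Sd) = Sd := by rw [← mul_assoc, ← cSdS]; exact hS2
  have kT : T * (T * Td) = T := by rw [← cTdT, ← mul_assoc]; exact hT1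
  have kT2 : T * (Td * Td) = Td := by rw [← mul_assoc, ← cTdT]; exact hT2
  have kS' : ∀ z, S * (S * (Sd * z)) = S * z := fun z => by
    calc S * (S * (Sd * z)) = (S * (S * Sd)) * z := by simp only [mul_assoc]
    _ = S * z := by rw [kS]
  have kS2' : ∀ z, S * (Sd * (Sd * z)) = Sd * z := fun z => by
    calc S * (Sd * (Sd * z)) = (S * (Sd * Sd)) * z := by simp only [mul_assoc]
    _ = Sd * z := by rw [kS2]
  have kT' : ∀ z, T * (T * (Td * z)) = T * z := fun z => by
    calc T * (T * (Td * z)) = (T * (T * Td)) * z := by simp only [mul_assoc]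
    _ = T * z := by rw [kT]
  have kT2' : ∀ z, T * (Td * (Td * z)) = Td * z := fun z => by
    calc T * (Td * (Td * z)) = (T * (Td * Td)) * z := by simp only [mul_assoc]
    _ = Td * z := by rw [kT2]
  -- Penrose conditions for Td * Sd as an MP inverse of S * T
  have c1 : (S * T) * (Td * Sd) * (S * T) = S * T := by
    simp only [mul_assoc, hC, cSdS, cTdT, cTSd, cTdS, cTdSd,
      apTS, apSdS, apTdT, apTSd, apTdS, apTdSd, kS, kS2, kT, kT2, kS', kS2', kT', kT2']
  have c2 : (Td * Sd) * (S * T) * (Td * Sd) = Td * Sd := by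
    simp only [mul_assoc, hC, cSdS, cTdT, cTSd, cTdS, cTdSd,
      apTS, apSdS, apTdT, apTSd, apTdS, apTdSd, kS, kS2, kT, kT2, kS', kS2', kT', kT2']
  have c3 : IsSelfAdjoint ((S * T) * (Td * Sd)) := by
    show star _ = _
    simp only [star_mul, hS.star_eq, hT.star_eq, hSdsa.star_eq, hTdsa.star_eq]
    simp only [mul_assoc, hC, cSdS, cTdT, cTSd, cTdS, cTdSd,
      apTS, apSdS, apTdT, apTSd, apTdS, apTdSd]
  have c4 : IsSelfAdjoint ((Td * Sd) * (S * T)) := by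
    show star _ = _
    simp only [star_mul, hS.star_eq, hT.star_eq, hSdsa.star_eq, hTdsa.star_eq]
    simp only [mul_assoc, hC, cSdS, cTdT, cTSd, cTdS, cTdSd,
      apTS, apSdS, apTdT, apTSd, apTdS, apTdSd]
  exact mp_unique' hA1 hA2 hA3 hA4 c1 c2 c3 c4
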